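/- The characteristic polynomial of S_{n,n+2} is x^n − (n+2)x^{n−2} − 6x^{n−3} + (3n−15)x^{n−4}. -/

import Mathlib

open Polynomial MeasureTheory

/-- The adjacency matrix of a simple graph over `ℝ` is Hermitian. -/
lemma adjHerm {V : Type*} [Fintype V] (G : SimpleGraph V) [DecidableRel G.Adj] :
    (SimpleGraph.adjMatrix ℝ G).IsHermitian := by
  ext i j
  simp [Matrix.conjTranspose_apply, SimpleGraph.adj_comm]

/-- The energy of a graph: sum of absolute values of adjacency eigenvalues. -/
noncomputable def energy {V : Type*} [Fintype V] [DecidableEq V] (G : SimpleGraph V)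
    [DecidableRel G.Adj] : ℝ :=
  ∑ i, |(adjHerm G).eigenvalues i|

/-- `SnE n k` is the graph `S_{n, n-1+k}`: the star on `n` vertices with center `0`,
plus `k` extra edges joining the fixed leaf `1` to the leaves `2, …, k+1`. -/
def SnE (n k : ℕ) : SimpleGraph (Fin n) where
  Adj v w := v ≠ w ∧ (v.val = 0 ∨ w.val = 0 ∨
    (v.val = 1 ∧ 2 ≤ w.val ∧ w.val ≤ k + 1) ∨ (w.val = 1 ∧ 2 ≤ v.val ∧ v.val ≤ k + 1))
  symm := by refine ⟨?_⟩; intro v w h; exact ⟨h.1.symm, by tauto⟩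
  loopless := by refine ⟨?_⟩; intro v h; exact h.1 rfl

instance {n k : ℕ} : DecidableRel (SnE n k).Adj := fun v w => by
  unfold SnE; exact inferInstanceAs (Decidable (_ ∧ _))

instance {α β : Type*} (G : SimpleGraph α) (H : SimpleGraph β) [DecidableRel G.Adj]
    [DecidableRel H.Adj] : DecidableRel (G ⊕g H).Adj := fun u v =>
  match u, v with
  | Sum.inl a, Sum.inl b => decidable_of_iff (G.Adj a b) (by simp [SimpleGraph.sum])
  | Sum.inr a, Sum.inr b => decidable_of_iff (H.Adj a b) (by simp [SimpleGraph.sum])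
  | Sum.inl _, Sum.inr _ => .isFalse (by simp [SimpleGraph.sum])
  | Sum.inr _, Sum.inl _ => .isFalse (by simp [SimpleGraph.sum])


namespace CharpolyAux
open Polynomial Matrix

def Gstar (m : ℕ) : SimpleGraph (Fin m) where
  Adj v w := v ≠ w ∧ ((v.val = 0 ∧ 1 ≤ w.val ∧ w.val ≤ 3) ∨ (w.val = 0 ∧ 1 ≤ v.val ∧ v.val ≤ 3))
  symm := by refine ⟨?_⟩; intro v w h; exact ⟨h.1.symm, by tauto⟩
  loopless := by refine ⟨?_⟩; intro v h; exact h.1 rfl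

instance {m : ℕ} : DecidableRel (Gstar m).Adj := fun v w => by
  unfold Gstar; exact inferInstanceAs (Decidable (_ ∧ _))

lemma Gstar_adj {m : ℕ} (v w : Fin m) : (Gstar m).Adj v w ↔
    v.val ≠ w.val ∧ ((v.val = 0 ∧ 1 ≤ w.val ∧ w.val ≤ 3) ∨ (w.val = 0 ∧ 1 ≤ v.val ∧ v.val ≤ 3)) := by
  constructor
  · intro h; exact ⟨fun e => h.1 (Fin.ext e), h.2⟩
  · intro h; exact ⟨fun e => h.1 (by rw [e]), h.2⟩

lemma SnE_adj {n k : ℕ} (v w : Fin n) : (SnE n k).Adj v w ↔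
    v.val ≠ w.val ∧ (v.val = 0 ∨ w.val = 0 ∨
      (v.val = 1 ∧ 2 ≤ w.val ∧ w.val ≤ k + 1) ∨ (w.val = 1 ∧ 2 ≤ v.val ∧ v.val ≤ k + 1)) := by
  constructor
  · intro h; exact ⟨fun e => h.1 (Fin.ext e), h.2⟩
  · intro h; exact ⟨fun e => h.1 (by rw [e]), h.2⟩

lemma charmatrix_sub {m n : ℕ} (G : SimpleGraph (Fin m)) (H : SimpleGraph (Fin n))
    [DecidableRel G.Adj] [DecidableRel H.Adj] (f : Fin n → Fin m) (hf : Function.Injective f)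
    (hadj : ∀ i j, G.Adj (f i) (f j) ↔ H.Adj i j) :
    (Matrix.charmatrix (SimpleGraph.adjMatrix ℝ G)).submatrix f f
      = Matrix.charmatrix (SimpleGraph.adjMatrix ℝ H) := by
  apply Matrix.ext; intro i j
  by_cases h : i = j
  · subst h; simp
  · have h' : f i ≠ f j := fun e => h (hf e)
    rw [Matrix.submatrix_apply, Matrix.charmatrix_apply_ne _ _ _ h',
      Matrix.charmatrix_apply_ne _ _ _ h]
    simp [hadj i j]

lemma Gstar_base :
    (Matrix.charmatrix (SimpleGraph.adjMatrix ℝ (Gstar 4))) =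
      !![X,-1,-1,-1; -1,X,0,0; -1,0,X,0; -1,0,0,X] := by
  apply Matrix.ext; intro i j
  fin_cases i <;> fin_cases j <;>
    simp [Matrix.charmatrix_apply, Matrix.diagonal_apply, Gstar_adj, Matrix.vecHead,
      Matrix.vecTail] <;> decide

lemma Gstar_det : ∀ k : ℕ,
    (Matrix.charmatrix (SimpleGraph.adjMatrix ℝ (Gstar (k+4)))).det = X^(k+4) - 3*X^(k+2) := by
  intro k
  induction k with
  | zero =>
    rw [Gstar_base]
    simp [Matrix.det_succ_row_zero, Fin.sum_univ_succ, Fin.succAbove,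
      Matrix.vecHead, Matrix.vecTail, show (Fin.castSucc 2 : Fin 4) = 2 from rfl]
    ring
  | succ k ih =>
    rw [Matrix.det_succ_row _ (Fin.last (k+4))]
    rw [Finset.sum_eq_single_of_mem (Fin.last (k+4)) (Finset.mem_univ _) ?_]
    · have e1 : Matrix.charmatrix (SimpleGraph.adjMatrix ℝ (Gstar (k+4+1)))
          (Fin.last (k+4)) (Fin.last (k+4)) = X := by
        rw [Matrix.charmatrix_apply_eq]
        have : ¬ (Gstar (k+4+1)).Adj (Fin.last (k+4)) (Fin.last (k+4)) := by
          rw [Gstar_adj]; simp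
        simp [this]
      rw [e1, Fin.succAbove_last,
        charmatrix_sub (Gstar (k+4+1)) (Gstar (k+4)) Fin.castSucc
          (Fin.castSucc_injective _) ?_ , ih]
      · have : Even ((Fin.last (k+4) : Fin (k+5)).val + (Fin.last (k+4) : Fin (k+5)).val) :=
          ⟨(Fin.last (k+4)).val, rfl⟩
        rw [this.neg_one_pow]
        ring
      · intro i j
        rw [Gstar_adj, Gstar_adj]
        simp only [Fin.coe_castSucc]
    · intro b _ hb
      have : Matrix.charmatrix (SimpleGraph.adjMatrix ℝ (Gstar (k+4+1))) (Fin.last (k+4)) b = 0 := by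
        rw [Matrix.charmatrix_apply_ne _ _ _ (Ne.symm hb)]
        have : ¬ (Gstar (k+4+1)).Adj (Fin.last (k+4)) b := by
          rw [Gstar_adj]; simp only [Fin.val_last]; omega
        simp [this]
      rw [this]; ring

lemma SnE_rec (k : ℕ) :
    (SimpleGraph.adjMatrix ℝ (SnE (k+6) 3)).charpoly
      = X * (SimpleGraph.adjMatrix ℝ (SnE (k+5) 3)).charpoly - (X^(k+4) - 3*X^(k+2)) := by
  set N := Matrix.charmatrix (SimpleGraph.adjMatrix ℝ (SnE (k+6) 3)) with hN
  have hlast0 : N (Fin.last (k+5)) 0 = -1 := by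
    rw [hN, Matrix.charmatrix_apply_ne _ _ _ (by simp [Fin.ext_iff])]
    have : (SnE (k+6) 3).Adj (Fin.last (k+5)) 0 := by
      rw [SnE_adj]; simp
    simp [this]
  have h0last : ∀ j : Fin (k+5), N (Fin.castSucc j) (Fin.last (k+5)) =
      if j = 0 then -1 else 0 := by
    intro j
    have hne : (Fin.castSucc j : Fin (k+6)) ≠ Fin.last (k+5) := by
      simp [Fin.ext_iff]; omega
    rw [hN, Matrix.charmatrix_apply_ne _ _ _ hne]
    by_cases hj : j = 0
    · subst hj
      have : (SnE (k+6) 3).Adj (0 : Fin (k+6)) (Fin.last (k+5)) := by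
        rw [SnE_adj]; simp
      simp [Fin.castSucc_zero, this]
    · have : ¬ (SnE (k+6) 3).Adj (Fin.castSucc j) (Fin.last (k+5)) := by
        rw [SnE_adj]
        simp only [Fin.coe_castSucc, Fin.val_last]
        have : j.val ≠ 0 := fun e => hj (Fin.ext e)
        omega
      simp [this, hj]
  have hsub1 : N.submatrix Fin.castSucc Fin.castSucc
      = Matrix.charmatrix (SimpleGraph.adjMatrix ℝ (SnE (k+5) 3)) := by
    rw [hN]
    apply charmatrix_sub _ _ _ (Fin.castSucc_injective _)
    intro i j
    rw [SnE_adj, SnE_adj]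
    simp only [Fin.coe_castSucc]
  have hsub2 : (N.submatrix Fin.castSucc Fin.succ).submatrix Fin.succ Fin.castSucc
      = Matrix.charmatrix (SimpleGraph.adjMatrix ℝ (Gstar (k+4))) := by
    rw [Matrix.submatrix_submatrix]
    have hcomp : (Fin.succ ∘ Fin.castSucc : Fin (k+4) → Fin (k+6))
        = Fin.castSucc ∘ Fin.succ := by
      funext i; exact (Fin.succ_castSucc i)
    rw [hcomp, hN]
    apply charmatrix_sub _ _ _ (Function.Injective.comp (Fin.castSucc_injective _)
      (Fin.succ_injective _))
    intro i j
    rw [SnE_adj, Gstar_adj]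
    simp only [Function.comp_apply, Fin.coe_castSucc, Fin.val_succ]
    omega
  -- compute det of N₁ := N.submatrix castSucc succ by expanding along last column
  have hN1 : (N.submatrix Fin.castSucc Fin.succ).det
      = (-1)^(k+4) * (-1) * (X^(k+4) - 3*X^(k+2)) := by
    rw [Matrix.det_succ_column (N.submatrix Fin.castSucc Fin.succ) (Fin.last (k+4))]
    rw [Finset.sum_eq_single_of_mem (0 : Fin (k+5)) (Finset.mem_univ _) ?_]
    · have e0 : (N.submatrix Fin.castSucc Fin.succ) 0 (Fin.last (k+4)) = -1 := by
        rw [Matrix.submatrix_apply, Fin.succ_last]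
        simpa using h0last 0
      rw [e0, Fin.succAbove_zero, Fin.succAbove_last, hsub2, Gstar_det k]
      simp [Fin.val_last]
    · intro b _ hb
      have eb : (N.submatrix Fin.castSucc Fin.succ) b (Fin.last (k+4)) = 0 := by
        rw [Matrix.submatrix_apply, Fin.succ_last, h0last b, if_neg hb]
      rw [eb]; ring
  rw [Matrix.charpoly, Matrix.charpoly, ← hN,
    Matrix.det_succ_row N (Fin.last (k+5)),
    Finset.sum_eq_add_of_mem (0 : Fin (k+6)) (Fin.last (k+5)) (Finset.mem_univ _)
      (Finset.mem_univ _) (by simp [Fin.ext_iff]) ?_]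
  · have elast : N (Fin.last (k+5)) (Fin.last (k+5)) = X := by
      rw [hN, Matrix.charmatrix_apply_eq]
      have : ¬ (SnE (k+6) 3).Adj (Fin.last (k+5)) (Fin.last (k+5)) := by
        rw [SnE_adj]; simp
      simp [this]
    rw [hlast0, elast, Fin.succAbove_last, Fin.succAbove_zero, hsub1, hN1]
    simp only [Fin.val_last, Fin.val_zero]
    have hs : ((-1 : ℝ[X])^(k+5)) * ((-1)^(k+4)) = -1 := by
      rw [← pow_add]
      exact Odd.neg_one_pow ⟨k+4, by ring⟩
    have heven : ((-1 : ℝ[X])^(k+5+(k+5))) = 1 := Even.neg_one_pow ⟨k+5, by ring⟩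
    linear_combination (X^(k+4) - 3*X^(k+2)) * hs
      + (X * (Matrix.charmatrix (SimpleGraph.adjMatrix ℝ (SnE (k+5) 3))).det) * heven
  · intro c _ hc
    have ec : N (Fin.last (k+5)) c = 0 := by
      rw [hN, Matrix.charmatrix_apply_ne _ _ _ (Ne.symm hc.2)]
      have : ¬ (SnE (k+6) 3).Adj (Fin.last (k+5)) c := by
        rw [SnE_adj]
        simp only [Fin.val_last]
        have : c.val ≠ 0 := fun e => hc.1 (Fin.ext e)
        omega
      simp [this]
    rw [ec]; ring

lemma SnE_base :
    (Matrix.charmatrix (SimpleGraph.adjMatrix ℝ (SnE 5 3))) =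
      !![X,-1,-1,-1,-1; -1,X,-1,-1,-1; -1,-1,X,0,0; -1,-1,0,X,0; -1,-1,0,0,X] := by
  apply Matrix.ext; intro i j
  fin_cases i <;> fin_cases j <;>
    simp [Matrix.charmatrix_apply, Matrix.diagonal_apply, SnE_adj, Matrix.vecHead,
      Matrix.vecTail] <;> decide

lemma SnE_base_det :
    (SimpleGraph.adjMatrix ℝ (SnE 5 3)).charpoly = X^5 - 7*X^3 - 6*X^2 := by
  rw [Matrix.charpoly, SnE_base]
  simp [Matrix.det_succ_row_zero, Fin.sum_univ_succ, Fin.succAbove,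
    Matrix.vecHead, Matrix.vecTail, show Fin.castSucc (2:Fin 3) = (2:Fin 4) from rfl,
    show Fin.castSucc (2:Fin 4) = (2:Fin 5) from rfl,
    show Fin.castSucc (Fin.succ (2:Fin 3)) = (3:Fin 5) from rfl]
  ring

end CharpolyAux

/-- The characteristic polynomial of `S_{n,n+2}` is
`x^n - (n+2)x^{n-2} - 6x^{n-3} + (3n-15)x^{n-4}`. -/
theorem charpoly_S_n_nplus2 (n : ℕ) (hn : 5 ≤ n) :
    (SimpleGraph.adjMatrix ℝ (SnE n 3)).charpoly =
      X ^ n - C ((n : ℝ) + 2) * X ^ (n - 2) - C (6 : ℝ) * X ^ (n - 3)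
        + C (3 * (n : ℝ) - 15) * X ^ (n - 4) := by
  obtain ⟨k, rfl⟩ : ∃ k, n = k + 5 := ⟨n - 5, by omega⟩
  rw [show k+5-2 = k+3 from by omega, show k+5-3 = k+2 from by omega,
    show k+5-4 = k+1 from by omega]
  induction k with
  | zero =>
    rw [show (0:ℕ)+5 = 5 from rfl, CharpolyAux.SnE_base_det]
    push_cast
    norm_num [map_ofNat]
  | succ k ih =>
    rw [show k+1+5 = k+6 from by omega,
      CharpolyAux.SnE_rec k, ih (by omega)]
    push_cast
    simp only [map_add, map_sub, map_mul, map_ofNat, map_one]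
    ring
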